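/- (Jacobi–Anger expansion.) For z ∈ ℝ and k a nonnegative integer define I_k(z) = (1/π) ∫_0^π exp(z·cos τ)·cos(kτ) dτ (the modified Bessel function of the first kind). Then for every θ ∈ ℝ the series I₀(z) + 2·Σ_{k=1}^{∞} I_k(z)·cos(kθ) converges and its sum equals exp(z·cos θ). -/

import Mathlib

open MeasureTheory Real intervalIntegral Complex

/-- The modified Bessel function of the first kind of integer order `k`:
`I_k(z) = (1/π) ∫_0^π exp(z cos τ) cos(kτ) dτ`. -/
noncomputable def besselI (k : ℕ) (z : ℝ) : ℝ :=
  (1 / Real.pi) * ∫ τ in Set.Icc 0 Real.pi, Real.exp (z * Real.cos τ) * Real.cos (k * τ)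


lemma besselI_eq (z : ℝ) (k : ℕ) :
    besselI k z = (1 / π) * ∫ τ in (0:ℝ)..π, Real.exp (z * Real.cos τ) * Real.cos (k * τ) := by
  rw [besselI, intervalIntegral.integral_of_le Real.pi_pos.le,
    MeasureTheory.integral_Icc_eq_integral_Ioc]

lemma abs_integral_le (z : ℝ) (k : ℕ) (hk : 1 ≤ k) :
    |∫ τ in (0:ℝ)..π, Real.exp (z * Real.cos τ) * Real.cos (k * τ)| ≤
      |z| * (1 + |z|) * Real.exp |z| * π / (k:ℝ)^2 := by
  have hKpos : (0:ℝ) < k := by exact_mod_cast hk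
  have hK : (k:ℝ) ≠ 0 := hKpos.ne'
  set u : ℝ → ℝ := fun τ => Real.exp (z * Real.cos τ) with hu_def
  set u' : ℝ → ℝ := fun τ => -(z * Real.sin τ) * Real.exp (z * Real.cos τ) with hu'_def
  set w' : ℝ → ℝ := fun τ =>
    (-(z * Real.cos τ) + z^2 * Real.sin τ ^ 2) * Real.exp (z * Real.cos τ) with hw'_def
  have hu : ∀ τ : ℝ, HasDerivAt u (u' τ) τ := by
    intro τ
    have h1 : HasDerivAt (fun τ : ℝ => z * Real.cos τ) (-(z * Real.sin τ)) τ := by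
      simpa [mul_comm, mul_neg] using (Real.hasDerivAt_cos τ).const_mul z
    simpa [u, u', mul_comm] using h1.exp
  have hu' : ∀ τ : ℝ, HasDerivAt u' (w' τ) τ := by
    intro τ
    have h1 : HasDerivAt (fun τ : ℝ => -(z * Real.sin τ)) (-(z * Real.cos τ)) τ := by
      exact ((Real.hasDerivAt_sin τ).const_mul z).neg
    have := h1.mul (hu τ)
    refine this.congr_deriv ?_
    simp only [u, u', w']
    ring
  have hv : ∀ τ : ℝ, HasDerivAt (fun τ => Real.sin (k * τ) / k) (Real.cos (k * τ)) τ := by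
    intro τ
    have h1 : HasDerivAt (fun τ : ℝ => (k:ℝ) * τ) (k:ℝ) τ := by
      simpa using (hasDerivAt_id τ).const_mul (k:ℝ)
    have := ((Real.hasDerivAt_sin ((k:ℝ) * τ)).comp τ h1).div_const (k:ℝ)
    refine this.congr_deriv ?_
    field_simp
  have hp : ∀ τ : ℝ, HasDerivAt (fun τ => -Real.cos (k * τ) / k) (Real.sin (k * τ)) τ := by
    intro τ
    have h1 : HasDerivAt (fun τ : ℝ => (k:ℝ) * τ) (k:ℝ) τ := by
      simpa using (hasDerivAt_id τ).const_mul (k:ℝ)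
    have := (((Real.hasDerivAt_cos ((k:ℝ) * τ)).comp τ h1).neg).div_const (k:ℝ)
    refine this.congr_deriv ?_
    field_simp
  have cu : Continuous u := by fun_prop
  have cu' : Continuous u' := by fun_prop
  have cw' : Continuous w' := by fun_prop
  have ccos : Continuous fun τ : ℝ => Real.cos (k * τ) := by fun_prop
  have csin : Continuous fun τ : ℝ => Real.sin (k * τ) := by fun_prop
  -- first integration by parts
  have step1 : (∫ τ in (0:ℝ)..π, u τ * Real.cos (k * τ))
      = -∫ τ in (0:ℝ)..π, u' τ * (Real.sin (k * τ) / k) := by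
    rw [intervalIntegral.integral_mul_deriv_eq_deriv_mul (fun x _ => hu x) (fun x _ => hv x)
      (cu'.intervalIntegrable _ _) (ccos.intervalIntegrable _ _)]
    simp [Real.sin_nat_mul_pi]
  -- second integration by parts
  have step2 : (∫ τ in (0:ℝ)..π, u' τ * Real.sin (k * τ))
      = ∫ τ in (0:ℝ)..π, w' τ * (Real.cos (k * τ) / k) := by
    rw [intervalIntegral.integral_mul_deriv_eq_deriv_mul (fun x _ => hu' x) (fun x _ => hp x)
      (cw'.intervalIntegrable _ _) (csin.intervalIntegrable _ _)]
    have : ∀ τ : ℝ, w' τ * (-Real.cos (k * τ) / k) = -(w' τ * (Real.cos (k * τ) / k)) := by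
      intro τ; ring
    simp only [u', Real.sin_pi, Real.sin_zero, this, intervalIntegral.integral_neg]
    ring
  have key : (∫ τ in (0:ℝ)..π, u τ * Real.cos (k * τ))
      = -(1 / (k:ℝ)^2) * ∫ τ in (0:ℝ)..π, w' τ * Real.cos (k * τ) := by
    rw [step1]
    have e1 : (∫ τ in (0:ℝ)..π, u' τ * (Real.sin (k * τ) / k))
        = (1/(k:ℝ)) * ∫ τ in (0:ℝ)..π, u' τ * Real.sin (k * τ) := by
      rw [← intervalIntegral.integral_const_mul]
      congr 1; ext τ; ring
    have e2 : (∫ τ in (0:ℝ)..π, w' τ * (Real.cos (k * τ) / k))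
        = (1/(k:ℝ)) * ∫ τ in (0:ℝ)..π, w' τ * Real.cos (k * τ) := by
      rw [← intervalIntegral.integral_const_mul]
      congr 1; ext τ; ring
    rw [e1, step2, e2]; ring
  rw [key]
  have bound : ∀ x ∈ Set.uIoc (0:ℝ) π, ‖w' x * Real.cos (k * x)‖ ≤ |z| * (1 + |z|) * Real.exp |z| := by
    intro x _
    have h1 : |w' x * Real.cos (k * x)| ≤ |w' x| := by
      rw [abs_mul]
      exact mul_le_of_le_one_right (abs_nonneg _) (Real.abs_cos_le_one _)
    refine h1.trans ?_
    simp only [w', abs_mul]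
    have hexp : Real.exp (z * Real.cos x) ≤ Real.exp |z| := by
      apply Real.exp_le_exp.mpr
      calc z * Real.cos x ≤ |z * Real.cos x| := le_abs_self _
        _ ≤ |z| := by rw [abs_mul]; exact mul_le_of_le_one_right (abs_nonneg _) (Real.abs_cos_le_one _)
    have h2 : |(-(z * Real.cos x) + z^2 * Real.sin x ^ 2)| ≤ |z| * (1 + |z|) := by
      have := Real.abs_cos_le_one x
      have hs := Real.abs_sin_le_one x
      have h3 : |(-(z * Real.cos x) + z^2 * Real.sin x ^ 2)| ≤ |z * Real.cos x| + |z^2 * Real.sin x ^ 2| := by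
        have := abs_add_le (-(z * Real.cos x)) (z^2 * Real.sin x ^ 2)
        rwa [abs_neg] at this
      refine h3.trans ?_
      have e1 : |z * Real.cos x| ≤ |z| := by
        rw [abs_mul]; exact mul_le_of_le_one_right (abs_nonneg _) this
      have e2 : |z^2 * Real.sin x ^ 2| ≤ |z| * |z| := by
        rw [_root_.abs_of_nonneg (by positivity)]
        nlinarith [_root_.sq_abs z, Real.sin_sq_le_one x, sq_nonneg (Real.sin x), sq_nonneg z]
      nlinarith [abs_nonneg z]
    calc |(-(z * Real.cos x) + z^2 * Real.sin x ^ 2)| * |Real.exp (z * Real.cos x)|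
        ≤ (|z| * (1 + |z|)) * Real.exp |z| := by
          rw [abs_of_pos (Real.exp_pos _)]
          exact mul_le_mul h2 hexp (Real.exp_pos _).le (by positivity)
      _ = |z| * (1 + |z|) * Real.exp |z| := by ring
  have := intervalIntegral.norm_integral_le_of_norm_le_const bound
  rw [abs_mul]
  have habs : |(-(1 / (k:ℝ)^2))| = 1 / (k:ℝ)^2 := by
    rw [abs_neg, abs_of_pos]; positivity
  rw [habs]
  rw [sub_zero, abs_of_pos Real.pi_pos] at this
  calc 1 / (k:ℝ)^2 * |∫ τ in (0:ℝ)..π, w' τ * Real.cos (k * τ)|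
      ≤ 1 / (k:ℝ)^2 * (|z| * (1 + |z|) * Real.exp |z| * π) := by
        apply mul_le_mul_of_nonneg_left _ (by positivity)
        exact this
    _ = |z| * (1 + |z|) * Real.exp |z| * π / (k:ℝ)^2 := by ring

lemma per (z : ℝ) : Function.Periodic (fun τ : ℝ => ((Real.exp (z * Real.cos τ) : ℝ) : ℂ)) (2*π) :=
  fun τ => by simp [Real.cos_add_two_pi]

noncomputable def Fc (z : ℝ) : C(AddCircle (2*π), ℂ) :=
  ⟨(per z).lift, by
    apply Continuous.quotient_liftOn'
    fun_prop⟩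

lemma Fc_coe (z : ℝ) (x : ℝ) : Fc z ↑x = ((Real.exp (z * Real.cos x) : ℝ) : ℂ) := rfl

-- the sine integral vanishes

lemma sin_int_zero (z : ℝ) (n : ℤ) :
    (∫ x in (0:ℝ)..(2*π), Real.sin (n * x) * Real.exp (z * Real.cos x)) = 0 := by
  set f : ℝ → ℝ := fun x => Real.sin (n * x) * Real.exp (z * Real.cos x) with hf
  have h := intervalIntegral.integral_comp_sub_left f (2*π) (a := 0) (b := 2*π)
  have hpt : ∀ x : ℝ, f (2*π - x) = -f x := by
    intro x
    have h1 : (n:ℝ) * (2*π - x) = n * (2*π) - n * x := by ring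
    have h2 : Real.sin ((n:ℝ) * (2*π) - n * x) = -Real.sin (n * x) :=
      Real.sin_int_mul_two_pi_sub _ n
    have h3 : Real.cos (2*π - x) = Real.cos x := by
      have := Real.cos_int_mul_two_pi_sub x 1
      simpa using this
    simp only [f, h1, h2, h3]
    ring
  simp only [hpt] at h
  rw [intervalIntegral.integral_neg] at h
  simp only [sub_self, sub_zero] at h
  linarith [h]

lemma cos_int_split (z : ℝ) (n : ℤ) :
    (∫ x in (0:ℝ)..(2*π), Real.cos (n * x) * Real.exp (z * Real.cos x))
      = 2 * ∫ x in (0:ℝ)..π, Real.cos (n * x) * Real.exp (z * Real.cos x) := by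
  set f : ℝ → ℝ := fun x => Real.cos (n * x) * Real.exp (z * Real.cos x) with hf
  have cf : Continuous f := by fun_prop
  have hsplit : (∫ x in (0:ℝ)..π, f x) + (∫ x in π..(2*π), f x) = ∫ x in (0:ℝ)..(2*π), f x :=
    intervalIntegral.integral_add_adjacent_intervals (cf.intervalIntegrable _ _)
      (cf.intervalIntegrable _ _)
  have h := intervalIntegral.integral_comp_sub_left f (2*π) (a := 0) (b := π)
  have hpt : ∀ x : ℝ, f (2*π - x) = f x := by
    intro x
    have h1 : (n:ℝ) * (2*π - x) = n * (2*π) - n * x := by ring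
    have h2 : Real.cos ((n:ℝ) * (2*π) - n * x) = Real.cos (n * x) :=
      Real.cos_int_mul_two_pi_sub _ n
    have h3 : Real.cos (2*π - x) = Real.cos x := by
      have := Real.cos_int_mul_two_pi_sub x 1
      simpa using this
    simp only [f, h1, h2, h3]
  simp only [hpt] at h
  have h6 : (2:ℝ)*π - π = π := by ring
  have h5 : (2:ℝ)*π - 0 = 2*π := by ring
  rw [h6, h5] at h
  rw [← hsplit, ← h]
  ring

lemma cos_int_split_nat (z : ℝ) (k : ℕ) :
    (∫ x in (0:ℝ)..(2*π), Real.cos (k * x) * Real.exp (z * Real.cos x))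
      = 2 * ∫ x in (0:ℝ)..π, Real.cos (k * x) * Real.exp (z * Real.cos x) := by
  have h := cos_int_split z (k : ℤ)
  push_cast at h
  exact h

lemma fourierCoeff_Fc (z : ℝ) (n : ℤ) :
    haveI : Fact (0 < 2*π) := ⟨Real.two_pi_pos⟩
    fourierCoeff (⇑(Fc z)) n = ((besselI n.natAbs z : ℝ) : ℂ) := by
  haveI : Fact (0 < 2*π) := ⟨Real.two_pi_pos⟩
  have hπ : (π : ℝ) ≠ 0 := Real.pi_ne_zero
  rw [fourierCoeff_eq_intervalIntegral (⇑(Fc z)) n 0, zero_add]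
  have key : ∀ x : ℝ, (@fourier (2*π) (-n) x : ℂ) • (Fc z ↑x) =
      ((Real.cos (n*x) * Real.exp (z*Real.cos x) : ℝ) : ℂ)
      + ((-(Real.sin (n*x)) * Real.exp (z*Real.cos x) : ℝ) : ℂ) * Complex.I := by
    intro x
    rw [smul_eq_mul, fourier_coe_apply, Fc_coe]
    have h2π : ((2*π : ℝ) : ℂ) ≠ 0 := by
      exact_mod_cast (by positivity : (2*π:ℝ) ≠ 0)
    have h2π' : (2 * (π:ℂ)) ≠ 0 := by
      simpa using Complex.ofReal_ne_zero.mpr (by positivity : (2*π:ℝ) ≠ 0)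
    have harg : 2 * (π:ℂ) * Complex.I * (-(n:ℂ)) * (x:ℂ) / (2 * (π:ℂ))
        = (-((n:ℂ) * (x:ℂ))) * Complex.I := by
      rw [div_eq_iff h2π']
      ring
    push_cast
    rw [harg, Complex.exp_mul_I]
    push_cast [Complex.cos_neg, Complex.sin_neg]
    ring
  simp only [key]
  have c1 : Continuous fun x : ℝ => ((Real.cos (n*x) * Real.exp (z*Real.cos x) : ℝ) : ℂ) := by
    fun_prop
  have c2 : Continuous fun x : ℝ =>
      ((-(Real.sin (n*x)) * Real.exp (z*Real.cos x) : ℝ) : ℂ) * Complex.I := by fun_prop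
  rw [intervalIntegral.integral_add (c1.intervalIntegrable _ _) (c2.intervalIntegrable _ _),
    intervalIntegral.integral_mul_const, intervalIntegral.integral_ofReal,
    intervalIntegral.integral_ofReal]
  have hsin : (∫ x in (0:ℝ)..(2*π), -(Real.sin (n*x)) * Real.exp (z*Real.cos x)) = 0 := by
    rw [show (fun x => -(Real.sin (n*x)) * Real.exp (z*Real.cos x))
        = fun x => -(Real.sin (n*x) * Real.exp (z*Real.cos x)) from funext fun x => by ring]
    rw [intervalIntegral.integral_neg, sin_int_zero z n]
    simp
  rw [hsin]
  have hcast : ((n:ℝ)) = (n.natAbs : ℝ) ∨ ((n:ℝ)) = -(n.natAbs : ℝ) := by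
    rcases Int.natAbs_eq n with h | h
    · left; rw [h]; simp [Nat.cast_natAbs]
    · right; rw [h]; simp [Nat.cast_natAbs]
  have hcosn : ∀ x : ℝ, Real.cos ((n:ℝ)*x) = Real.cos ((n.natAbs:ℝ)*x) := by
    intro x
    rcases hcast with h | h
    · rw [h]
    · rw [h, show -(n.natAbs:ℝ) * x = -((n.natAbs:ℝ) * x) by ring, Real.cos_neg]
  simp only [hcosn]
  rw [cos_int_split_nat z n.natAbs, besselI_eq,
    show (∫ τ in (0:ℝ)..π, Real.exp (z * Real.cos τ) * Real.cos (n.natAbs * τ))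
      = ∫ x in (0:ℝ)..π, Real.cos (n.natAbs * x) * Real.exp (z * Real.cos x) from by
        congr 1; ext τ; ring]
  simp only [Complex.ofReal_zero, zero_mul, add_zero]
  rw [Complex.real_smul, ← Complex.ofReal_mul]
  norm_cast
  field_simp

lemma summable_abs_besselI (z : ℝ) : Summable (fun k : ℕ => |besselI k z|) := by
  set C := |z| * (1 + |z|) * Real.exp |z| with hC
  have hC0 : 0 ≤ C := by positivity
  rw [← summable_nat_add_iff 1]
  have hb : ∀ k : ℕ, |besselI (k+1) z| ≤ C / ((k:ℝ)+1)^2 := by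
    intro k
    rw [besselI_eq, abs_mul]
    have h1 := abs_integral_le z (k+1) (by omega)
    have h2 : |1/π| = 1/π := abs_of_pos (by positivity)
    rw [h2]
    have h3 : ((k+1 : ℕ):ℝ) = (k:ℝ) + 1 := by push_cast; ring
    rw [h3] at h1
    calc 1/π * |∫ τ in (0:ℝ)..π, Real.exp (z * Real.cos τ) * Real.cos (((k+1 : ℕ):ℝ) * τ)|
        ≤ 1/π * (C * π / ((k:ℝ)+1)^2) := by
          apply mul_le_mul_of_nonneg_left _ (by positivity)
          rw [h3]
          exact h1
      _ = C / ((k:ℝ)+1)^2 := by field_simp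
  have hmaj : Summable (fun k : ℕ => C / ((k:ℝ)+1)^2) := by
    have h0 : Summable (fun n : ℕ => 1 / ((n:ℝ))^2) :=
      Real.summable_one_div_nat_pow.mpr one_lt_two
    have h1 := (summable_nat_add_iff 1).mpr h0
    have h2 : (fun n : ℕ => 1 / (((n+1 : ℕ)):ℝ)^2) = fun n : ℕ => 1 / ((n:ℝ)+1)^2 := by
      ext n; push_cast; ring
    rw [h2] at h1
    simpa [div_eq_mul_inv] using h1.mul_left C
  exact Summable.of_nonneg_of_le (fun _ => abs_nonneg _) hb hmaj

lemma summable_fc (z : ℝ) :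
    haveI : Fact (0 < 2*π) := ⟨Real.two_pi_pos⟩
    Summable (fourierCoeff (⇑(Fc z))) := by
  haveI : Fact (0 < 2*π) := ⟨Real.two_pi_pos⟩
  have habs := summable_abs_besselI z
  have hnat : Summable (fun n : ℕ => fourierCoeff (⇑(Fc z)) (n : ℤ)) := by
    apply Summable.of_norm
    have e : (fun n : ℕ => ‖fourierCoeff (⇑(Fc z)) (n : ℤ)‖) = fun n : ℕ => |besselI n z| := by
      ext n; rw [fourierCoeff_Fc]; simp [Complex.norm_real]
    rw [e]; exact habs
  have hneg : Summable (fun n : ℕ => fourierCoeff (⇑(Fc z)) (-((n : ℤ)+1))) := by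
    apply Summable.of_norm
    have e : (fun n : ℕ => ‖fourierCoeff (⇑(Fc z)) (-((n : ℤ)+1))‖)
        = fun n : ℕ => |besselI (n+1) z| := by
      ext n; rw [fourierCoeff_Fc]
      have : ((-((n : ℤ)+1)).natAbs) = n + 1 := by simp; omega
      rw [this]; simp [Complex.norm_real]
    rw [e]
    exact (summable_nat_add_iff 1).mpr habs
  exact Summable.of_nat_of_neg_add_one hnat hneg

/-- Jacobi–Anger expansion: for all real `z` and `θ`, the series
`I₀(z) + 2 Σ_{k=1}^{∞} I_k(z) cos(kθ)` converges with sum `exp(z cos θ)`. -/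
theorem jacobi_anger_expansion (z θ : ℝ) :
    HasSum (fun k : ℕ => 2 * besselI (k + 1) z * Real.cos ((k + 1) * θ))
      (Real.exp (z * Real.cos θ) - besselI 0 z) := by
  haveI : Fact (0 < 2*π) := ⟨Real.two_pi_pos⟩
  have hsum := has_pointwise_sum_fourier_series_of_summable (summable_fc z)
    ((θ : ℝ) : AddCircle (2*π))
  set c : ℤ → ℂ := fun n => fourierCoeff (⇑(Fc z)) n • fourier n ((θ : ℝ) : AddCircle (2*π))
    with hc
  have h2 := hsum.nat_add_neg
  have hfour : ∀ m : ℤ, (fourier m ((θ : ℝ) : AddCircle (2*π)) : ℂ)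
      = Complex.exp ((((m : ℝ) * θ : ℝ)) * Complex.I) := by
    intro m
    rw [fourier_coe_apply]
    congr 1
    have h2π' : (2 * (π:ℂ)) ≠ 0 := by
      simpa using Complex.ofReal_ne_zero.mpr (by positivity : (2*π:ℝ) ≠ 0)
    push_cast
    rw [div_eq_iff h2π']
    ring
  have hterm : ∀ n : ℕ, c n + c (-n) = ((2 * besselI n z * Real.cos (n * θ) : ℝ) : ℂ) := by
    intro n
    simp only [hc, smul_eq_mul, fourierCoeff_Fc, hfour]
    have hna : ((-n : ℤ)).natAbs = n := by simp
    have hna2 : ((n : ℤ)).natAbs = n := by simp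
    rw [hna, hna2]
    have e1 : (((((-n : ℤ)) : ℝ) * θ : ℝ) : ℂ) = -((((n:ℝ) * θ : ℝ)) : ℂ) := by push_cast; ring
    rw [e1]
    have h2c := Complex.two_cos (x := (((n:ℝ) * θ : ℝ) : ℂ))
    rw [← Complex.ofReal_cos] at h2c
    push_cast at h2c ⊢
    linear_combination (-(besselI n z : ℂ)) * h2c
  have hc0 : c 0 = ((besselI 0 z : ℝ) : ℂ) := by
    simp only [hc, fourierCoeff_Fc, fourier_zero, smul_eq_mul, mul_one, Int.natAbs_zero]
  have hFθ : Fc z ((θ : ℝ) : AddCircle (2*π)) = ((Real.exp (z * Real.cos θ) : ℝ) : ℂ) := rfl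
  rw [hFθ, hc0] at h2
  simp only [hterm] at h2
  -- take real parts
  have h3 := h2.mapL Complex.reCLM
  simp only [Complex.reCLM_apply, Complex.ofReal_re, Complex.add_re] at h3
  -- h3 : HasSum (fun n : ℕ => 2 * besselI n z * Real.cos (n * θ))
  --        (Real.exp (z * Real.cos θ) + besselI 0 z)
  have h4 := (hasSum_nat_add_iff' (f := fun n : ℕ => 2 * besselI n z * Real.cos (n * θ)) 1).mpr h3
  simp only [Finset.range_one, Finset.sum_singleton, Nat.cast_zero, zero_mul, Real.cos_zero,
    mul_one] at h4
  have heq : (fun k : ℕ => 2 * besselI (k + 1) z * Real.cos ((k + 1 : ℕ) * θ))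
      = fun k : ℕ => 2 * besselI (k + 1) z * Real.cos (((k:ℝ) + 1) * θ) := by
    ext k; push_cast; ring_nf
  have h5 : Real.exp (z * Real.cos θ) + besselI 0 z - 2 * besselI 0 z
      = Real.exp (z * Real.cos θ) - besselI 0 z := by ring
  rw [h5] at h4
  rw [heq] at h4
  exact h4
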